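/- (Tangent direction at the contact point determines the Kreiss–Lopatinskiĭ quantity for the fully nonlinear free-boundary condition.) Suppose u, u_i are smooth ℝ²-valued functions at the boundary x = 0, ẋ̲ ∈ ℝ, A = A(u|_{x=0}) a 2×2 matrix with positive eigenvalue λ₊ and unit eigenvector e₊, such that ẋ̲ is not an eigenvalue of A, the jump condition (ẋ̲ Id - A)(∂ₓ^φu - ∂ₓ^φu_i) = ∂ₜ^φu_i + A(u_i)∂ₓ^φu_i holds at x = 0, and ∂ₓ^φu - ∂ₓ^φu_i ≠ 0 at x = 0. Let μ be a unit vector with μ · (∂ₜ^φu_i + A(u_i)∂ₓ^φu_i)|_{x=0} = 0 (it exists and is unique up to sign). Then, with ν₍₂₎ = ((Id - ẋ̲A⁻¹)²)ᵀ((∂ₓ^φu - ∂ₓ^φu_i)⊥), one has the identity |ν₍₂₎ · e₊| = ((λ₊ - ẋ̲)³/λ₊²) · (|∂ₓ^φu - ∂ₓ^φu_i| / |(ẋ̲ Id - A)ᵀμ|) · |μ · e₊| at x = 0. -/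

import Mathlib

open Matrix

/-- Rotation of a plane vector by `π/2`. -/
def perp (v : Fin 2 → ℝ) : Fin 2 → ℝ := ![-v 1, v 0]

/-- Euclidean length of a plane vector. -/
noncomputable def len (v : Fin 2 → ℝ) : ℝ := Real.sqrt (v ⬝ᵥ v)

/-- **The Kreiss–Lopatinskiĭ quantity for the fully nonlinear free-boundary condition.**
With `p = (∂ₓ^φu - ∂ₓ^φu_i)|_{x=0} ≠ 0`, `q = (∂ₜ^φu_i + A(u_i)∂ₓ^φu_i)|_{x=0}`, the jump
condition `(ẋ̲ Id - A) p = q`, an invertible `A = A(u|_{x=0})` with eigenvalue `λ₊ > ẋ̲` and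
unit eigenvector `e₊`, `ẋ̲` not an eigenvalue of `A`, and `μ` a unit vector with `μ·q = 0`:
for `ν₍₂₎ = ((Id - ẋ̲A⁻¹)²)ᵀ (p⊥)` one has
`|ν₍₂₎·e₊| = ((λ₊-ẋ̲)³/λ₊²) (|p| / |(ẋ̲Id-A)ᵀμ|) |μ·e₊|`. -/
theorem stmt9 (A : Matrix (Fin 2) (Fin 2) ℝ) (lp xd : ℝ) (ep μ p q : Fin 2 → ℝ)
    (hlp : 0 < lp) (hdet : IsUnit A.det)
    (he : ep ⬝ᵥ ep = 1) (heig : A *ᵥ ep = lp • ep)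
    (hxd : xd < lp)
    (hMdet : IsUnit (xd • (1 : Matrix (Fin 2) (Fin 2) ℝ) - A).det)
    (hjump : (xd • (1 : Matrix (Fin 2) (Fin 2) ℝ) - A) *ᵥ p = q)
    (hp : p ≠ 0)
    (hμ : μ ⬝ᵥ μ = 1) (hμq : μ ⬝ᵥ q = 0) :
    |((((1 : Matrix (Fin 2) (Fin 2) ℝ) - xd • A⁻¹) ^ 2)ᵀ *ᵥ perp p) ⬝ᵥ ep| =
      ((lp - xd) ^ 3 / lp ^ 2) *
        (len p / len ((xd • (1 : Matrix (Fin 2) (Fin 2) ℝ) - A)ᵀ *ᵥ μ)) * |μ ⬝ᵥ ep| := by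
  have hlp0 : lp ≠ 0 := ne_of_gt hlp
  set M : Matrix (Fin 2) (Fin 2) ℝ := xd • (1 : Matrix (Fin 2) (Fin 2) ℝ) - A with hM
  set B : Matrix (Fin 2) (Fin 2) ℝ := (1 : Matrix (Fin 2) (Fin 2) ℝ) - xd • A⁻¹ with hB
  -- A⁻¹ ep = lp⁻¹ • ep
  have hAinv : A⁻¹ *ᵥ ep = lp⁻¹ • ep := by
    have h1 : A⁻¹ *ᵥ (A *ᵥ ep) = ep := by
      rw [Matrix.mulVec_mulVec, Matrix.nonsing_inv_mul A hdet, Matrix.one_mulVec]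
    rw [heig, Matrix.mulVec_smul] at h1
    have := congrArg (fun v => lp⁻¹ • v) h1
    simp only [smul_smul, inv_mul_cancel₀ hlp0, one_smul] at this; exact this
  set t : ℝ := 1 - xd * lp⁻¹ with ht
  have hBep : B *ᵥ ep = t • ep := by
    rw [hB, Matrix.sub_mulVec, Matrix.one_mulVec, Matrix.smul_mulVec, hAinv,
      smul_smul, ht, sub_smul, one_smul]
  have hB2ep : (B ^ 2) *ᵥ ep = (t * t) • ep := by
    rw [pow_two, ← Matrix.mulVec_mulVec, hBep, Matrix.mulVec_smul, hBep, smul_smul]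
  -- LHS inner product
  have hLHS : ((B ^ 2)ᵀ *ᵥ perp p) ⬝ᵥ ep = (t * t) * (perp p ⬝ᵥ ep) := by
    rw [Matrix.mulVec_transpose, ← Matrix.dotProduct_mulVec, hB2ep, dotProduct_smul,
      smul_eq_mul]
  -- w := Mᵀ μ is orthogonal to p
  set w : Fin 2 → ℝ := Mᵀ *ᵥ μ with hw
  have hwp : w ⬝ᵥ p = 0 := by
    rw [hw, Matrix.mulVec_transpose, ← Matrix.dotProduct_mulVec, hjump, hμq]
  have hμ0 : μ ≠ 0 := by
    intro h; rw [h] at hμ; simp [dotProduct] at hμ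
  have hw0 : w ≠ 0 := by
    intro h
    have h1 : (Mᵀ)⁻¹ *ᵥ (Mᵀ *ᵥ μ) = μ := by
      rw [Matrix.mulVec_mulVec, Matrix.nonsing_inv_mul _ (by simpa [Matrix.det_transpose] using hMdet),
        Matrix.one_mulVec]
    rw [← hw, h, Matrix.mulVec_zero] at h1
    exact hμ0 h1.symm
  -- w = c • perp p
  obtain ⟨c, hc⟩ : ∃ c : ℝ, w = c • perp p := by
    have hpp : p 0 ≠ 0 ∨ p 1 ≠ 0 := by
      by_contra h
      push_neg at h
      apply hp
      funext i
      fin_cases i <;> simp [h.1, h.2]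
    have hdot : w 0 * p 0 + w 1 * p 1 = 0 := by
      simpa [dotProduct, Fin.sum_univ_two] using hwp
    rcases hpp with h0 | h1
    · refine ⟨w 1 / p 0, ?_⟩
      funext i
      fin_cases i <;> simp [perp] <;> field_simp <;> nlinarith [hdot]
    · refine ⟨-(w 0) / p 1, ?_⟩
      funext i
      fin_cases i <;> simp [perp] <;> field_simp <;> nlinarith [hdot]
  have hc0 : c ≠ 0 := by
    intro h; rw [h, zero_smul] at hc; exact hw0 hc
  -- perp p ⬝ᵥ ep = c⁻¹ * ((xd - lp) * (μ ⬝ᵥ ep))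
  have hMep : M *ᵥ ep = (xd - lp) • ep := by
    rw [hM, Matrix.sub_mulVec, Matrix.smul_mulVec, Matrix.one_mulVec, heig, sub_smul]
  have hwep : w ⬝ᵥ ep = (xd - lp) * (μ ⬝ᵥ ep) := by
    rw [hw, Matrix.mulVec_transpose, ← Matrix.dotProduct_mulVec, hMep,
      dotProduct_smul, smul_eq_mul]
  have hperp_ep : perp p ⬝ᵥ ep = c⁻¹ * ((xd - lp) * (μ ⬝ᵥ ep)) := by
    have : perp p = c⁻¹ • w := by rw [hc, smul_smul, inv_mul_cancel₀ hc0, one_smul]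
    rw [this, smul_dotProduct, smul_eq_mul, hwep]
  -- lengths
  have hppos : 0 < p ⬝ᵥ p := by
    have hpp : p 0 ≠ 0 ∨ p 1 ≠ 0 := by
      by_contra h
      push_neg at h
      exact hp (funext fun i => by fin_cases i <;> simp [h.1, h.2])
    have : p ⬝ᵥ p = p 0 * p 0 + p 1 * p 1 := by simp [dotProduct, Fin.sum_univ_two]
    rw [this]
    rcases hpp with h | h
    · nlinarith [mul_self_pos.mpr h, mul_self_nonneg (p 1)]
    · nlinarith [mul_self_pos.mpr h, mul_self_nonneg (p 0)]
  have hlenp : len p = Real.sqrt (p ⬝ᵥ p) := rfl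
  have hlenp0 : 0 < len p := Real.sqrt_pos.mpr hppos
  have hperpperp : perp p ⬝ᵥ perp p = p ⬝ᵥ p := by
    simp [perp, dotProduct, Fin.sum_univ_two]; ring
  have hlenw : len w = |c| * len p := by
    rw [len, hc, smul_dotProduct, dotProduct_smul, smul_eq_mul, smul_eq_mul,
      ← mul_assoc, hperpperp, ← Real.sqrt_sq_eq_abs, len, ← Real.sqrt_mul (sq_nonneg c), sq]
  -- assemble
  rw [hLHS, hperp_ep, hlenw]
  rw [abs_mul, abs_mul, abs_mul, abs_inv]
  have hxl : |xd - lp| = lp - xd := by rw [abs_sub_comm, abs_of_pos (by linarith)]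
  have htt : |t * t| = (lp - xd) ^ 2 / lp ^ 2 := by
    rw [abs_mul, ht]
    have : 1 - xd * lp⁻¹ = (lp - xd) / lp := by field_simp
    rw [this, abs_div, abs_of_pos (by linarith : (0:ℝ) < lp - xd), abs_of_pos hlp]
    ring
  rw [abs_mul, ← abs_mul, htt, hxl]
  have hc' : |c| ≠ 0 := abs_ne_zero.mpr hc0
  have hl' : len p ≠ 0 := ne_of_gt hlenp0
  field_simp
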